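/- Let F_q be a finite field of characteristic ≠ 2,3 and E': y² = x³ + A'x + B' an elliptic curve over F_q. Then E' has an F_q-rational point of order 2 (equivalently even group order, equivalently even trace) if and only if there exists an elliptic curve E over F_q with Hess(E) = E' (as curves in short Weierstrass form up to the standard change of variables). -/

import Mathlib

/-- The short Weierstrass form of the Hessian of `y² = x³ + Ax + B` (for `A ≠ 0`):
`y² = x³ - ((A³/3+3B²)/A⁴)x - ((A³B/3+2B³)/A⁶)`. -/
noncomputable def hessCurve {F : Type*} [Field F] (A B : F) : WeierstrassCurve F :=
  { a₁ := 0, a₂ := 0, a₃ := 0,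
    a₄ := -(A ^ 3 / 3 + 3 * B ^ 2) / A ^ 4,
    a₆ := -(A ^ 3 * B / 3 + 2 * B ^ 3) / A ^ 6 }

open Classical in
/-- over a finite field `F` of characteristic `≠ 2,3`, an elliptic curve
`E' : y² = x³ + A'x + B'` has an `F`-rational point of order 2 (equivalently even order,
equivalently even trace) iff there exists an elliptic curve `E : y² = x³ + Ax + B` over `F`
with `Hess(E) = E'` up to the standard change of variables. -/
theorem even_order_iff_hessian {F : Type*} [Field F] [Fintype F]
    (h2 : (2 : F) ≠ 0) (h3 : (3 : F) ≠ 0) (A' B' : F)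
    (hΔ' : 4 * A' ^ 3 + 27 * B' ^ 2 ≠ 0) :
    (∃ P : (WeierstrassCurve.toAffine
        { a₁ := 0, a₂ := 0, a₃ := 0, a₄ := A', a₆ := B' : WeierstrassCurve F }).Point,
      P ≠ 0 ∧ (2 : ℤ) • P = 0) ↔
    (∃ A B : F, A ≠ 0 ∧ 4 * A ^ 3 + 27 * B ^ 2 ≠ 0 ∧
      ∃ C : WeierstrassCurve.VariableChange F,
        C • hessCurve A B =
          { a₁ := 0, a₂ := 0, a₃ := 0, a₄ := A', a₆ := B' : WeierstrassCurve F }) := by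
  set W' : WeierstrassCurve.Affine F :=
    { a₁ := 0, a₂ := 0, a₃ := 0, a₄ := A', a₆ := B' } with hW'
  have h9 : (9 : F) ≠ 0 := fun h => pow_ne_zero 2 h3 (by linear_combination h)
  have h27 : (27 : F) ≠ 0 := fun h => pow_ne_zero 3 h3 (by linear_combination h)
  have h729 : (729 : F) ≠ 0 := fun h => pow_ne_zero 6 h3 (by linear_combination h)
  constructor
  · rintro ⟨P, hP0, hP2⟩
    obtain ⟨x₀, heq⟩ : ∃ x₀ : F, x₀ ^ 3 + A' * x₀ + B' = 0 := by
      induction P with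
      | zero => exact absurd rfl hP0
      | some x y h =>
        have hy : y = W'.negY x y := by
          by_contra hy
          rw [two_zsmul, WeierstrassCurve.Affine.Point.add_self_of_Y_ne hy] at hP2
          exact WeierstrassCurve.Affine.Point.some_ne_zero _ hP2
        have hy0 : y = 0 := by
          have hyy : y = -y - 0 * x - 0 := by
            simpa [WeierstrassCurve.Affine.negY, hW'] using hy
          have h2y : 2 * y = 0 := by linear_combination hyy
          rcases mul_eq_zero.mp h2y with h | h
          · exact absurd h h2
          · exact h
        have heqn := (WeierstrassCurve.Affine.equation_iff _ _).mp h.1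
        refine ⟨x, ?_⟩
        rw [hy0] at heqn
        simp only [hW'] at heqn
        linear_combination -heqn
    obtain ⟨b, hbdef⟩ : ∃ b : F, b = 3 * x₀ ^ 2 + A' := ⟨_, rfl⟩
    have hb : b ≠ 0 := by
      rw [hbdef]
      intro hb0
      have hA : A' = -(3 * x₀ ^ 2) := by linear_combination hb0
      have hB : B' = 2 * x₀ ^ 3 := by
        rw [hA] at heq; linear_combination heq
      exact hΔ' (by rw [hA, hB]; ring)
    have hd : (3 * x₀ ^ 2 + 4 * A') ≠ 0 := by
      intro hd0
      have hA : 4 * A' = -(3 * x₀ ^ 2) := by linear_combination hd0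
      have h4B : 4 * B' = -x₀ ^ 3 := by linear_combination 4 * heq - x₀ * hA
      have key : 64 * (4 * A' ^ 3 + 27 * B' ^ 2) = 0 := by
        linear_combination (64 * A' ^ 2 - 48 * A' * x₀ ^ 2 + 36 * x₀ ^ 4) * hA
          + (432 * B' - 108 * x₀ ^ 3) * h4B
      have h64 : (64 : F) ≠ 0 := fun h => pow_ne_zero 6 h2 (by linear_combination h)
      exact hΔ' (mul_left_cancel₀ h64 (key.trans (mul_zero 64).symm))
    have hA' : A' = b - 3 * x₀ ^ 2 := by rw [hbdef]; ring
    have hB' : B' = 2 * x₀ ^ 3 - b * x₀ := by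
      rw [hbdef]; linear_combination heq
    have hd2 : 4 * b - 9 * x₀ ^ 2 ≠ 0 := by
      rw [hbdef]; intro h; exact hd (by linear_combination h)
    refine ⟨-1 / (3 * b), -x₀ / (9 * b ^ 2), ?_, ?_,
      1, ?_⟩
    · exact div_ne_zero (neg_ne_zero.mpr one_ne_zero) (mul_ne_zero h3 hb)
    · have hval : 4 * (-1 / (3 * b)) ^ 3 + 27 * (-x₀ / (9 * b ^ 2)) ^ 2
          = -(4 * b - 9 * x₀ ^ 2) / (27 * b ^ 4) := by
        field_simp [hb, h3, h9, h27, h729]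
        ring
      rw [hval]
      exact div_ne_zero (neg_ne_zero.mpr hd2) (mul_ne_zero h27 (pow_ne_zero _ hb))
    · rw [one_smul]
      ext
      · rfl
      · rfl
      · rfl
      · show -((-1 / (3 * b)) ^ 3 / 3 + 3 * (-x₀ / (9 * b ^ 2)) ^ 2)
            / (-1 / (3 * b)) ^ 4 = A'
        rw [hA']
        field_simp [hb, h3, h9, h27, h729]
        ring
      · show -((-1 / (3 * b)) ^ 3 * (-x₀ / (9 * b ^ 2)) / 3 + 2 * (-x₀ / (9 * b ^ 2)) ^ 3)
            / (-1 / (3 * b)) ^ 6 = B'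
        have hA0 : (-1 / (3 * b) : F) ≠ 0 :=
          div_ne_zero (neg_ne_zero.mpr one_ne_zero) (mul_ne_zero h3 hb)
        rw [div_eq_iff (pow_ne_zero 6 hA0), hB']
        have h11 : b ^ 11 * b⁻¹ ^ 11 = 1 := by
          rw [← mul_pow, mul_inv_cancel₀ hb, one_pow]
        field_simp [hb, h3, h9, h27, h729]
        have h5i : (531441 : F) * (531441 : F)⁻¹ = 1 :=
          mul_inv_cancel₀ (fun h => pow_ne_zero 12 h3 (by linear_combination h))
        ring
  · rintro ⟨A, B, hA, hAB, C, hC⟩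
    have hu : ((C.u⁻¹ : Fˣ) : F) ≠ 0 := Units.ne_zero _
    have h1 := congrArg WeierstrassCurve.a₁ hC
    have h2' := congrArg WeierstrassCurve.a₂ hC
    have h3' := congrArg WeierstrassCurve.a₃ hC
    have h4' := congrArg WeierstrassCurve.a₄ hC
    have h6' := congrArg WeierstrassCurve.a₆ hC
    simp only [WeierstrassCurve.variableChange_a₁, WeierstrassCurve.variableChange_a₂,
      WeierstrassCurve.variableChange_a₃, WeierstrassCurve.variableChange_a₄,
      WeierstrassCurve.variableChange_a₆, hessCurve, hW'] at h1 h2' h3' h4' h6'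
    have hs : C.s = 0 := by
      rcases mul_eq_zero.mp h1 with h | h
      · exact absurd h hu
      · rcases mul_eq_zero.mp (show (2 : F) * C.s = 0 by linear_combination h) with h' | h'
        · exact absurd h' h2
        · exact h'
    have ht : C.t = 0 := by
      rcases mul_eq_zero.mp h3' with h | h
      · exact absurd h (pow_ne_zero _ hu)
      · rcases mul_eq_zero.mp (show (2 : F) * C.t = 0 by linear_combination h) with h' | h'
        · exact absurd h' h2
        · exact h'
    have hr : C.r = 0 := by
      rw [hs] at h2'
      rcases mul_eq_zero.mp h2' with h | h
      · exact absurd h (pow_ne_zero _ hu)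
      · rcases mul_eq_zero.mp (show (3 : F) * C.r = 0 by linear_combination h) with h' | h'
        · exact absurd h' h3
        · exact h'
    have H4 : ((C.u⁻¹ : Fˣ) : F) ^ 4 * (-(A ^ 3 / 3 + 3 * B ^ 2) / A ^ 4) = A' := by
      rw [hr, ht] at h4'
      linear_combination h4'
    have H6 : ((C.u⁻¹ : Fˣ) : F) ^ 6 * (-(A ^ 3 * B / 3 + 2 * B ^ 3) / A ^ 6) = B' := by
      rw [hr, ht] at h6'
      linear_combination h6'
    have key : (-B / A ^ 2) ^ 3 + -(A ^ 3 / 3 + 3 * B ^ 2) / A ^ 4 * (-B / A ^ 2)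
        + -(A ^ 3 * B / 3 + 2 * B ^ 3) / A ^ 6 = 0 := by
      have hAi : A ^ 12 * A⁻¹ ^ 12 = 1 := by
        rw [← mul_pow, mul_inv_cancel₀ hA, one_pow]
      field_simp
      have h3i : (3 : F) * (3 : F)⁻¹ = 1 := mul_inv_cancel₀ h3
      ring
    obtain ⟨x₀, heq⟩ : ∃ x₀ : F, x₀ ^ 3 + A' * x₀ + B' = 0 := by
      refine ⟨((C.u⁻¹ : Fˣ) : F) ^ 2 * (-B / A ^ 2), ?_⟩
      linear_combination ((C.u⁻¹ : Fˣ) : F) ^ 6 * key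
        - ((C.u⁻¹ : Fˣ) : F) ^ 2 * (-B / A ^ 2) * H4 - H6
    have hΔW : W'.Δ ≠ 0 := by
      have hΔeq : W'.Δ = -16 * (4 * A' ^ 3 + 27 * B' ^ 2) := by
        simp only [hW', WeierstrassCurve.Δ, WeierstrassCurve.b₂, WeierstrassCurve.b₄,
          WeierstrassCurve.b₆, WeierstrassCurve.b₈]
        ring
      rw [hΔeq]
      exact mul_ne_zero (fun h => pow_ne_zero 4 h2 (by linear_combination -h)) hΔ'
    have heqn : W'.Equation x₀ 0 := by
      rw [WeierstrassCurve.Affine.equation_iff]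
      simp only [hW']
      linear_combination -heq
    have hns : W'.Nonsingular x₀ 0 :=
      (WeierstrassCurve.Affine.equation_iff_nonsingular_of_Δ_ne_zero (W := W') hΔW).mp heqn
    refine ⟨WeierstrassCurve.Affine.Point.some _ _ hns,
      WeierstrassCurve.Affine.Point.some_ne_zero _, ?_⟩
    rw [two_zsmul]
    exact WeierstrassCurve.Affine.Point.add_self_of_Y_eq
      (by simp [WeierstrassCurve.Affine.negY, hW'])
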